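/- Let A be a C*-algebra and α : A → A an isometric *-endomorphism with the Rokhlin property (for every p ∈ ℕ, every finite F ⊆ α^p(A), every ε > 0, there exist mutually orthogonal positive contractions e_{0,0},…,e_{0,p−1},e_{1,0},…,e_{1,p} satisfying the four Rokhlin conditions). Then the induced automorphism α_α of the stationary inductive limit A_α has the Rokhlin property for automorphisms: for every p, every finite F ⊆ A_α, every ε > 0 there are mutually orthogonal positive contractions in A_α satisfying the analogous four conditions with respect to α_α. -/

import Mathlib

open Finset

/-- Approximate Rokhlin towers of height `p` (two towers, of heights `p` and `p+1`)
for a map `α : A → A`, relative to a finite set `F` and tolerance `ε`. -/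
def RokhlinTowers {A : Type*} [NonUnitalCStarAlgebra A] [PartialOrder A]
    [StarOrderedRing A] (α : A → A) (p : ℕ) (F : Finset A) (ε : ℝ) : Prop :=
  ∃ e₀ e₁ : ℕ → A,
    (∀ j < p, 0 ≤ e₀ j ∧ ‖e₀ j‖ ≤ 1) ∧
    (∀ j < p + 1, 0 ≤ e₁ j ∧ ‖e₁ j‖ ≤ 1) ∧
    (∀ i < p, ∀ j < p, i ≠ j → e₀ i * e₀ j = 0) ∧
    (∀ i < p + 1, ∀ j < p + 1, i ≠ j → e₁ i * e₁ j = 0) ∧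
    (∀ i < p, ∀ j < p + 1, e₀ i * e₁ j = 0 ∧ e₁ j * e₀ i = 0) ∧
    (∀ a ∈ F, ‖((∑ j ∈ range p, e₀ j) + ∑ j ∈ range (p + 1), e₁ j) * a - a‖ < ε) ∧
    (∀ a ∈ F, ∀ j < p, ‖e₀ j * a - a * e₀ j‖ < ε) ∧
    (∀ a ∈ F, ∀ j < p + 1, ‖e₁ j * a - a * e₁ j‖ < ε) ∧
    (∀ a ∈ F, ∀ j, j + 1 < p → ‖α (e₀ j) * a - e₀ (j + 1) * a‖ < ε) ∧
    (∀ a ∈ F, ∀ j, j + 1 < p + 1 → ‖α (e₁ j) * a - e₁ (j + 1) * a‖ < ε) ∧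
    (∀ a ∈ F, ‖α (e₀ (p - 1) + e₁ p) * a - (e₀ 0 + e₁ 0) * a‖ < ε)

/-- The Rokhlin property for an endomorphism `α : A → A` (Definition 2.1 of the paper):
Rokhlin towers exist relative to finite subsets of `α^p(A)`. -/
def RokhlinEndo {A : Type*} [NonUnitalCStarAlgebra A] [PartialOrder A]
    [StarOrderedRing A] (α : A → A) : Prop :=
  ∀ p : ℕ, 0 < p → ∀ F : Finset A, (∀ a ∈ F, a ∈ Set.range (α^[p])) →
    ∀ ε : ℝ, 0 < ε → RokhlinTowers α p F ε

/-- The Rokhlin property for an automorphism (Definition 1.1 of the paper):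
Rokhlin towers exist relative to arbitrary finite subsets. -/
def RokhlinAuto {A : Type*} [NonUnitalCStarAlgebra A] [PartialOrder A]
    [StarOrderedRing A] (α : A → A) : Prop :=
  ∀ p : ℕ, 0 < p → ∀ F : Finset A, ∀ ε : ℝ, 0 < ε → RokhlinTowers α p F ε

/-- If `α : A → A` is an injective (hence isometric) *-endomorphism with
the Rokhlin property, and `L` with canonical isometric maps `γ_n` is the stationary
inductive limit `A →α A →α ⋯` with induced automorphism `β` (`β ∘ γ_n = γ_n ∘ α`),
then `β` has the Rokhlin property for automorphisms. -/
private lemma nonneg_map' {A L : Type*} [NonUnitalCStarAlgebra A] [PartialOrder A]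
    [StarOrderedRing A] [NonUnitalCStarAlgebra L] [PartialOrder L] [StarOrderedRing L]
    (φ : A →⋆ₙₐ[ℂ] L) {a : A} (ha : 0 ≤ a) : 0 ≤ φ a := by
  rw [StarOrderedRing.nonneg_iff] at ha ⊢
  induction ha using AddSubmonoid.closure_induction with
  | mem x hx =>
      obtain ⟨s, rfl⟩ := hx
      exact AddSubmonoid.subset_closure ⟨φ s, by simp [map_mul, map_star]⟩
  | zero => simpa using zero_mem _
  | add x y _ _ hx hy => simpa [map_add] using AddSubmonoid.add_mem _ hx hy


theorem induced_automorphism_has_rokhlin_property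
    {A L : Type*} [NonUnitalCStarAlgebra A] [PartialOrder A] [StarOrderedRing A]
    [NonUnitalCStarAlgebra L] [PartialOrder L] [StarOrderedRing L]
    (α : A →⋆ₙₐ[ℂ] A) (hinj : Function.Injective α)
    (hRok : RokhlinEndo (⇑α))
    (γ : ℕ → (A →⋆ₙₐ[ℂ] L))
    (hiso : ∀ n, Isometry (γ n))
    (hcompat : ∀ n : ℕ, (γ (n + 1)).comp α = γ n)
    (hdense : closure (⋃ n : ℕ, Set.range (γ n)) = Set.univ)
    (β : L ≃⋆ₐ[ℂ] L) (hβ : ∀ (n : ℕ) (a : A), β (γ n a) = γ n (α a)) :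
    RokhlinAuto (⇑β) := by
  intro p hp F ε hε
  classical
  have hp1 : (1 : ℝ) ≤ p := by exact_mod_cast hp
  set δ : ℝ := ε / (8 * (p + 1)) with hδdef
  have hδ : 0 < δ := by positivity
  have hδle : (2 * (p : ℝ) + 2) * δ ≤ ε / 4 := by
    have h : (2 * (p : ℝ) + 2) * (ε / (8 * (p + 1))) = ε / 4 := by
      have hne : (p : ℝ) + 1 ≠ 0 := by positivity
      field_simp
      ring
    rw [hδdef]
    linarith [h]
  -- norms
  have hnorm : ∀ n (x : A), ‖γ n x‖ = ‖x‖ := fun n x =>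
    (hiso n).norm_map_of_map_zero (map_zero _) x
  have halpha : ∀ x : A, ‖α x‖ = ‖x‖ := by
    intro x
    have h2 : γ 1 (α x) = γ 0 x := DFunLike.congr_fun (hcompat 0) x
    calc ‖α x‖ = ‖γ 1 (α x)‖ := (hnorm 1 _).symm
      _ = ‖γ 0 x‖ := by rw [h2]
      _ = ‖x‖ := hnorm 0 x
  -- nesting of the ranges
  have hnested : ∀ (k n : ℕ) (b : A), γ (n + k) (α^[k] b) = γ n b := by
    intro k
    induction k with
    | zero => intro n b; simp
    | succ k ih =>
        intro n b
        have h1 : α^[k + 1] b = α^[k] (α b) := Function.iterate_succ_apply α k b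
        have h2 : γ (n + 1) (α b) = γ n b := DFunLike.congr_fun (hcompat n) b
        have h3 : n + (k + 1) = (n + 1) + k := by omega
        rw [h3, h1, ih (n + 1) (α b), h2]
  -- approximate elements of L
  have happrox : ∀ a : L, ∃ (n : ℕ) (b : A), ‖a - γ n b‖ < δ := by
    intro a
    have ha : a ∈ closure (⋃ n, Set.range (γ n)) := by rw [hdense]; trivial
    rcases Metric.mem_closure_iff.1 ha δ hδ with ⟨y, hy, hdy⟩
    rcases Set.mem_iUnion.1 hy with ⟨n, hy'⟩
    rcases hy' with ⟨b, rfl⟩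
    exact ⟨n, b, by simpa [dist_eq_norm] using hdy⟩
  choose nn bb hbb using happrox
  set N : ℕ := F.sup nn with hN
  set m : ℕ := N + p with hm
  set c : L → A := fun a => α^[p + (N - nn a)] (bb a) with hc
  have hγc : ∀ a ∈ F, γ m (c a) = γ (nn a) (bb a) := by
    intro a ha
    have hna : nn a ≤ N := Finset.le_sup ha
    have h3 : nn a + (p + (N - nn a)) = m := by omega
    have := hnested (p + (N - nn a)) (nn a) (bb a)
    rw [h3] at this
    exact this
  have hac : ∀ a ∈ F, ‖a - γ m (c a)‖ < δ := by
    intro a ha; rw [hγc a ha]; exact hbb a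
  -- the finite set in A
  set F' : Finset A := F.image c with hF'def
  have hF' : ∀ x ∈ F', x ∈ Set.range (⇑α)^[p] := by
    intro x hx
    rcases Finset.mem_image.1 hx with ⟨a, _, rfl⟩
    exact ⟨α^[N - nn a] (bb a), (Function.iterate_add_apply (⇑α) p (N - nn a) (bb a)).symm⟩
  have hmem : ∀ a ∈ F, c a ∈ F' := fun a ha => Finset.mem_image_of_mem c ha
  -- common estimate for the β-shift conditions
  have est : ∀ a ∈ F, ∀ x y : A, ‖α x * c a - y * c a‖ < ε / 2 → ‖x‖ ≤ 2 → ‖y‖ ≤ 2 →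
      ‖β (γ m x) * a - γ m y * a‖ < ε := by
    intro a ha x y h1 hx hy
    have hβx : β (γ m x) = γ m (α x) := hβ m x
    have key : β (γ m x) * a - γ m y * a
        = γ m (α x * c a - y * c a) + (γ m (α x) - γ m y) * (a - γ m (c a)) := by
      rw [hβx, map_sub, map_mul, map_mul]; noncomm_ring
    have b1 : ‖γ m (α x * c a - y * c a)‖ < ε / 2 := by rw [hnorm]; exact h1
    have b2 : ‖(γ m (α x) - γ m y) * (a - γ m (c a))‖ ≤ 4 * δ := by
      have hop : ‖γ m (α x) - γ m y‖ ≤ 4 := by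
        have h4 := norm_sub_le (γ m (α x)) (γ m y)
        rw [hnorm, hnorm, halpha x] at h4
        linarith
      calc ‖(γ m (α x) - γ m y) * (a - γ m (c a))‖
          ≤ ‖γ m (α x) - γ m y‖ * ‖a - γ m (c a)‖ := norm_mul_le _ _
        _ ≤ 4 * δ := mul_le_mul hop (hac a ha).le (norm_nonneg _) (by norm_num)
    calc ‖β (γ m x) * a - γ m y * a‖
        ≤ ‖γ m (α x * c a - y * c a)‖ + ‖(γ m (α x) - γ m y) * (a - γ m (c a))‖ := by
          rw [key]; exact norm_add_le _ _
      _ < ε := by nlinarith [hδ.le]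
  obtain ⟨e₀, e₁, he₀, he₁, ho₀, ho₁, ho01, hsum, hc₀, hc₁, hs₀, hs₁, hcy⟩ :=
    hRok p hp F' hF' (ε / 2) (by positivity)
  refine ⟨fun j => γ m (e₀ j), fun j => γ m (e₁ j), ?_, ?_, ?_, ?_, ?_, ?_, ?_, ?_, ?_, ?_, ?_⟩
  · intro j hj
    exact ⟨nonneg_map' (γ m) (he₀ j hj).1, by rw [hnorm]; exact (he₀ j hj).2⟩
  · intro j hj
    exact ⟨nonneg_map' (γ m) (he₁ j hj).1, by rw [hnorm]; exact (he₁ j hj).2⟩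
  · intro i hi j hj hij
    rw [← map_mul, ho₀ i hi j hj hij, map_zero]
  · intro i hi j hj hij
    rw [← map_mul, ho₁ i hi j hj hij, map_zero]
  · intro i hi j hj
    constructor
    · rw [← map_mul, (ho01 i hi j hj).1, map_zero]
    · rw [← map_mul, (ho01 i hi j hj).2, map_zero]
  · -- sum condition
    intro a ha
    set S : A := (∑ j ∈ range p, e₀ j) + ∑ j ∈ range (p + 1), e₁ j with hS
    have hSL : ((∑ j ∈ range p, γ m (e₀ j)) + ∑ j ∈ range (p + 1), γ m (e₁ j)) = γ m S := by
      rw [hS, map_add, map_sum, map_sum]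
    rw [hSL]
    have hSb : ‖S * c a - c a‖ < ε / 2 := hsum (c a) (hmem a ha)
    have hSnorm : ‖S‖ ≤ 2 * p + 1 := by
      have h1 : ‖∑ j ∈ range p, e₀ j‖ ≤ p := by
        calc ‖∑ j ∈ range p, e₀ j‖ ≤ ∑ j ∈ range p, ‖e₀ j‖ := norm_sum_le _ _
          _ ≤ ∑ _j ∈ range p, (1 : ℝ) :=
              Finset.sum_le_sum fun j hj => (he₀ j (mem_range.1 hj)).2
          _ = p := by simp
      have h2 : ‖∑ j ∈ range (p + 1), e₁ j‖ ≤ p + 1 := by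
        calc ‖∑ j ∈ range (p + 1), e₁ j‖ ≤ ∑ j ∈ range (p + 1), ‖e₁ j‖ := norm_sum_le _ _
          _ ≤ ∑ _j ∈ range (p + 1), (1 : ℝ) :=
              Finset.sum_le_sum fun j hj => (he₁ j (mem_range.1 hj)).2
          _ = p + 1 := by push_cast; simp
      calc ‖S‖ ≤ ‖∑ j ∈ range p, e₀ j‖ + ‖∑ j ∈ range (p + 1), e₁ j‖ := norm_add_le _ _
        _ ≤ 2 * p + 1 := by linarith
    have key : γ m S * a - a
        = γ m (S * c a - c a) + (γ m S * (a - γ m (c a)) - (a - γ m (c a))) := by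
      rw [map_sub, map_mul]; noncomm_ring
    have b1 : ‖γ m (S * c a - c a)‖ < ε / 2 := by rw [hnorm]; exact hSb
    have b2 : ‖γ m S * (a - γ m (c a))‖ ≤ (2 * p + 1) * δ := by
      calc ‖γ m S * (a - γ m (c a))‖ ≤ ‖γ m S‖ * ‖a - γ m (c a)‖ := norm_mul_le _ _
        _ ≤ (2 * p + 1) * δ := by
            apply mul_le_mul _ (hac a ha).le (norm_nonneg _) (by positivity)
            rw [hnorm]; exact hSnorm
    have b3 : ‖a - γ m (c a)‖ < δ := hac a ha
    calc ‖γ m S * a - a‖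
        ≤ ‖γ m (S * c a - c a)‖ + (‖γ m S * (a - γ m (c a))‖ + ‖a - γ m (c a)‖) := by
          rw [key]
          exact (norm_add_le _ _).trans (by gcongr; exact norm_sub_le _ _)
      _ < ε := by nlinarith [hδ.le]
  · -- commutator e₀
    intro a ha j hj
    have h1 : ‖e₀ j * c a - c a * e₀ j‖ < ε / 2 := hc₀ (c a) (hmem a ha) j hj
    have hn1 : ‖e₀ j‖ ≤ 1 := (he₀ j hj).2
    have key : γ m (e₀ j) * a - a * γ m (e₀ j)
        = γ m (e₀ j * c a - c a * e₀ j)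
          + (γ m (e₀ j) * (a - γ m (c a)) - (a - γ m (c a)) * γ m (e₀ j)) := by
      rw [map_sub, map_mul, map_mul]; noncomm_ring
    have b1 : ‖γ m (e₀ j * c a - c a * e₀ j)‖ < ε / 2 := by rw [hnorm]; exact h1
    have b2 : ‖γ m (e₀ j) * (a - γ m (c a))‖ ≤ 1 * δ :=
      (norm_mul_le _ _).trans (mul_le_mul (by rw [hnorm]; exact hn1) (hac a ha).le
        (norm_nonneg _) zero_le_one)
    have b3 : ‖(a - γ m (c a)) * γ m (e₀ j)‖ ≤ δ * 1 :=
      (norm_mul_le _ _).trans (mul_le_mul (hac a ha).le (by rw [hnorm]; exact hn1)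
        (norm_nonneg _) hδ.le)
    calc ‖γ m (e₀ j) * a - a * γ m (e₀ j)‖
        ≤ ‖γ m (e₀ j * c a - c a * e₀ j)‖
          + (‖γ m (e₀ j) * (a - γ m (c a))‖ + ‖(a - γ m (c a)) * γ m (e₀ j)‖) := by
          rw [key]
          exact (norm_add_le _ _).trans (by gcongr; exact norm_sub_le _ _)
      _ < ε := by nlinarith [hδ.le]
  · -- commutator e₁
    intro a ha j hj
    have h1 : ‖e₁ j * c a - c a * e₁ j‖ < ε / 2 := hc₁ (c a) (hmem a ha) j hj
    have hn1 : ‖e₁ j‖ ≤ 1 := (he₁ j hj).2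
    have key : γ m (e₁ j) * a - a * γ m (e₁ j)
        = γ m (e₁ j * c a - c a * e₁ j)
          + (γ m (e₁ j) * (a - γ m (c a)) - (a - γ m (c a)) * γ m (e₁ j)) := by
      rw [map_sub, map_mul, map_mul]; noncomm_ring
    have b1 : ‖γ m (e₁ j * c a - c a * e₁ j)‖ < ε / 2 := by rw [hnorm]; exact h1
    have b2 : ‖γ m (e₁ j) * (a - γ m (c a))‖ ≤ 1 * δ :=
      (norm_mul_le _ _).trans (mul_le_mul (by rw [hnorm]; exact hn1) (hac a ha).le
        (norm_nonneg _) zero_le_one)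
    have b3 : ‖(a - γ m (c a)) * γ m (e₁ j)‖ ≤ δ * 1 :=
      (norm_mul_le _ _).trans (mul_le_mul (hac a ha).le (by rw [hnorm]; exact hn1)
        (norm_nonneg _) hδ.le)
    calc ‖γ m (e₁ j) * a - a * γ m (e₁ j)‖
        ≤ ‖γ m (e₁ j * c a - c a * e₁ j)‖
          + (‖γ m (e₁ j) * (a - γ m (c a))‖ + ‖(a - γ m (c a)) * γ m (e₁ j)‖) := by
          rw [key]
          exact (norm_add_le _ _).trans (by gcongr; exact norm_sub_le _ _)
      _ < ε := by nlinarith [hδ.le]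
  · intro a ha j hj
    exact est a ha (e₀ j) (e₀ (j + 1))
      (hs₀ (c a) (hmem a ha) j hj)
      (le_trans (he₀ j (by omega)).2 one_le_two)
      (le_trans (he₀ (j + 1) hj).2 one_le_two)
  · intro a ha j hj
    exact est a ha (e₁ j) (e₁ (j + 1))
      (hs₁ (c a) (hmem a ha) j hj)
      (le_trans (he₁ j (by omega)).2 one_le_two)
      (le_trans (he₁ (j + 1) hj).2 one_le_two)
  · intro a ha
    have h1 : γ m (e₀ (p - 1)) + γ m (e₁ p) = γ m (e₀ (p - 1) + e₁ p) :=
      (map_add _ _ _).symm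
    have h2 : γ m (e₀ 0) + γ m (e₁ 0) = γ m (e₀ 0 + e₁ 0) := (map_add _ _ _).symm
    rw [h1, h2]
    apply est a ha (e₀ (p - 1) + e₁ p) (e₀ 0 + e₁ 0) (hcy (c a) (hmem a ha))
    · exact (norm_add_le _ _).trans
        (by linarith [(he₀ (p - 1) (by omega)).2, (he₁ p (by omega)).2])
    · exact (norm_add_le _ _).trans
        (by linarith [(he₀ 0 hp).2, (he₁ 0 (by omega)).2])
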